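/- Let ℋ be a set of graphs such that no H ∈ ℋ contains a spanning complete bipartite subgraph. For a positive integer w let f(w) denote the supremum of χ(G) over all finite ℋ-free graphs G with ω(G) = w, and suppose f(w) is finite for every w. Then f is superadditive: f(w1) + f(w2) ≤ f(w1 + w2) for all positive integers w1, w2. -/

import Mathlib

open SimpleGraph

/-- `G` is `H`-free: no induced subgraph of `G` is isomorphic to `H`. -/
def IndFree {α β : Type*} (H : SimpleGraph α) (G : SimpleGraph β) : Prop :=
  ∀ s : Set β, ¬ Nonempty (H ≃g G.induce s)

/-- The banner: a 4-cycle `0-1-2-3-0` together with a pendant vertex `4` adjacent to `0`. -/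
def banner : SimpleGraph (Fin 5) :=
  SimpleGraph.fromEdgeSet {s(0,1), s(1,2), s(2,3), s(3,0), s(0,4)}

/-- The co-banner: the complement of the banner. -/
def coBanner : SimpleGraph (Fin 5) := bannerᶜ

/-- `2K₂`: the disjoint union of two edges. -/
def twoK2 : SimpleGraph (Fin 4) := SimpleGraph.fromEdgeSet {s(0,1), s(2,3)}

/-- `3K₁`: three pairwise nonadjacent vertices. -/
def threeK1 : SimpleGraph (Fin 3) := ⊥

/-- The 5-wheel: a 5-cycle `0-1-2-3-4-0` plus a hub `5` adjacent to all cycle vertices. -/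
def wheel5 : SimpleGraph (Fin 6) :=
  SimpleGraph.fromEdgeSet
    {s(0,1), s(1,2), s(2,3), s(3,4), s(4,0), s(5,0), s(5,1), s(5,2), s(5,3), s(5,4)}

/-- A nonempty set `M` is a module if every vertex outside `M` is adjacent to all
or to none of the vertices of `M`. -/
def IsModule {V : Type*} (G : SimpleGraph V) (M : Set V) : Prop :=
  M.Nonempty ∧ ∀ v ∉ M, (∀ u ∈ M, G.Adj v u) ∨ (∀ u ∈ M, ¬ G.Adj v u)

/-- `X` is a clique-separator of modules in `G`. -/
def IsCliqueSeparatorOfModules {V : Type*} (G : SimpleGraph V) (X : Set V) : Prop :=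
  (∃ (k : ℕ) (Xs : Fin k → Set V),
      (∀ i, IsModule G (Xs i)) ∧
      (∀ i j, i ≠ j → Disjoint (Xs i) (Xs j)) ∧
      (∀ i j, i ≠ j → ∀ u ∈ Xs i, ∀ v ∈ Xs j, G.Adj u v) ∧
      X = ⋃ i, Xs i) ∧
  (∃ A B : Set V, A ∪ B = Set.univ ∧ (A \ B).Nonempty ∧ (B \ A).Nonempty ∧
      (∀ a ∈ A \ B, ∀ b ∈ B \ A, ¬ G.Adj a b) ∧ A ∩ B = X)

/-- A graph is prime if it has no homogeneous set,
i.e. no module `M` with `1 < |M| < |V(G)|`. -/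
def IsPrime {V : Type*} (G : SimpleGraph V) : Prop :=
  ¬ ∃ M : Set V, IsModule G M ∧ 1 < M.ncard ∧ M.ncard < Nat.card V

/-- A nonempty graph is critical if deleting any vertex decreases the chromatic number. -/
def IsCritical {V : Type*} (G : SimpleGraph V) : Prop :=
  Nonempty V ∧ ∀ v : V, (G.induce {u | u ≠ v}).chromaticNumber < G.chromaticNumber

/-- `G` is a `non-empty, 2K₁-free'-expansion of `G'`: the fibres of `f` partition `V(G)`
into nonempty cliques, with complete/empty bipartite connections according to `G'`. -/
def IsExpansionOf {V W : Type*} (G : SimpleGraph V) (G' : SimpleGraph W) : Prop :=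
  ∃ f : V → W, Function.Surjective f ∧
    (∀ u v, u ≠ v → f u = f v → G.Adj u v) ∧
    (∀ u v, f u ≠ f v → (G.Adj u v ↔ G'.Adj (f u) (f v)))

/-- The weighted chromatic number `χ_q(G)`: the least `k` such that every vertex `v`
can be assigned a set of `q v` colours from `{1,…,k}` with disjoint sets on adjacent
vertices. -/
noncomputable def wChromaticNumber {V : Type*} (G : SimpleGraph V) (q : V → ℕ) : ℕ :=
  sInf {k | ∃ L : V → Finset (Fin k), (∀ v, (L v).card = q v) ∧
    ∀ ⦃u v⦄, G.Adj u v → Disjoint (L u) (L v)}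

/-- The weighted clique number `ω_q(G)`: the maximum total weight of a clique. -/
noncomputable def wCliqueNum {V : Type*} (G : SimpleGraph V) (q : V → ℕ) : ℕ :=
  sSup {m | ∃ s : Finset V, G.IsClique (s : Set V) ∧ m = ∑ v ∈ s, q v}

/-- `Q(F)`: a path `u₁u₂u₃u₄` whose third vertex `u₃` has been replaced by a copy of `F`,
each of whose vertices is adjacent to both `u₂` and `u₄`. Here `inr 0 = u₁`, `inr 1 = u₂`,
`inr 2 = u₄`, and `inl w` are the vertices of the copy of `F`. -/
def QGraph {W : Type*} (F : SimpleGraph W) : SimpleGraph (W ⊕ Fin 3) :=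
  SimpleGraph.fromRel (fun a b =>
    (∃ w w', a = Sum.inl w ∧ b = Sum.inl w' ∧ F.Adj w w') ∨
    (a = Sum.inr 0 ∧ b = Sum.inr 1) ∨
    (∃ w, a = Sum.inl w ∧ (b = Sum.inr 1 ∨ b = Sum.inr 2)))

/-- The join of two graphs: all edges of both graphs plus all edges in between. -/
def joinGraph {α β : Type*} (G₁ : SimpleGraph α) (G₂ : SimpleGraph β) :
    SimpleGraph (α ⊕ β) :=
  SimpleGraph.fromRel (fun a b =>
    (∃ u v, a = Sum.inl u ∧ b = Sum.inl v ∧ G₁.Adj u v) ∨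
    (∃ u v, a = Sum.inr u ∧ b = Sum.inr v ∧ G₂.Adj u v) ∨
    (∃ u v, a = Sum.inl u ∧ b = Sum.inr v))

/-- `H` has a spanning complete bipartite subgraph. -/
def HasSpanningCompleteBipartite {α : Type*} (H : SimpleGraph α) : Prop :=
  ∃ A B : Set α, A.Nonempty ∧ B.Nonempty ∧ Disjoint A B ∧ A ∪ B = Set.univ ∧
    ∀ a ∈ A, ∀ b ∈ B, H.Adj a b

/-- `G'` is a `q`-expansion of `G`: each vertex `u` of `G` is replaced by a clique on
`q u` vertices, joined completely or not at all according to adjacency in `G`. -/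
def IsWeightedExpansion {V' V : Type*} (G' : SimpleGraph V') (G : SimpleGraph V)
    (q : V → ℕ) : Prop :=
  ∃ f : V' → V,
    (∀ v : V, Nat.card (f ⁻¹' {v}) = q v) ∧
    (∀ a b : V', a ≠ b → f a = f b → G'.Adj a b) ∧
    (∀ a b : V', f a ≠ f b → (G'.Adj a b ↔ G.Adj (f a) (f b)))

/-- `q` is `⊲`-minimal: no weight function pointwise at most `q` with strictly smaller
total weight has the same weighted chromatic number. -/
def IsTriMinimal {V : Type*} [Fintype V] (G : SimpleGraph V) (q : V → ℕ) : Prop :=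
  ¬ ∃ q' : V → ℕ, (∀ v, q' v ≤ q v) ∧ (∑ v, q' v) < (∑ v, q v) ∧
      wChromaticNumber G q' = wChromaticNumber G q

/-- `fstar ℋ w` is the supremum of the chromatic numbers of finite `ℋ`-free graphs
with clique number `w`. -/
noncomputable def fstar (ℋ : Set (Σ n : ℕ, SimpleGraph (Fin n))) (w : ℕ) : ℕ∞ :=
  ⨆ (n : ℕ) (G : SimpleGraph (Fin n)) (_ : ∀ H ∈ ℋ, IndFree H.2 G)
    (_ : G.cliqueNum = w), G.chromaticNumber


section AuxLemmas

variable {α β γ δ : Type*} {G : SimpleGraph α} {G' : SimpleGraph β}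
  {G₁ : SimpleGraph α} {G₂ : SimpleGraph β}

@[simp] lemma join_adj_ll {u v : α} :
    (joinGraph G₁ G₂).Adj (Sum.inl u) (Sum.inl v) ↔ G₁.Adj u v := by
  simp only [joinGraph, fromRel_adj, ne_eq, Sum.inl.injEq]
  constructor
  · rintro ⟨hne, h | h⟩ <;> aesop (add simp [SimpleGraph.adj_comm])
  · intro h; exact ⟨h.ne, Or.inl (Or.inl ⟨u, v, rfl, rfl, h⟩)⟩

@[simp] lemma join_adj_rr {u v : β} :
    (joinGraph G₁ G₂).Adj (Sum.inr u) (Sum.inr v) ↔ G₂.Adj u v := by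
  simp only [joinGraph, fromRel_adj, ne_eq, Sum.inr.injEq]
  constructor
  · rintro ⟨hne, h | h⟩ <;> aesop (add simp [SimpleGraph.adj_comm])
  · intro h; exact ⟨h.ne, Or.inl (Or.inr (Or.inl ⟨u, v, rfl, rfl, h⟩))⟩

@[simp] lemma join_adj_lr {u : α} {v : β} :
    (joinGraph G₁ G₂).Adj (Sum.inl u) (Sum.inr v) :=
  ⟨by simp, Or.inl (Or.inr (Or.inr ⟨u, v, rfl, rfl⟩))⟩

@[simp] lemma join_adj_rl {u : β} {v : α} :
    (joinGraph G₁ G₂).Adj (Sum.inr u) (Sum.inl v) :=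
  (join_adj_lr).symm

lemma chromaticNumber_join_ge [Fintype α] [Fintype β] :
    G₁.chromaticNumber + G₂.chromaticNumber ≤ (joinGraph G₁ G₂).chromaticNumber := by
  classical
  set J := joinGraph G₁ G₂
  have hJc : J.Colorable (Fintype.card (α ⊕ β)) := J.colorable_of_fintype
  have hJne : J.chromaticNumber ≠ ⊤ :=
    ne_top_of_le_ne_top (by simp [Fintype.card_sum])
      hJc.chromaticNumber_le
  obtain ⟨C⟩ := J.colorable_chromaticNumber_of_fintype
  set k := ENat.toNat J.chromaticNumber with hk
  set S₁ : Finset (Fin k) := Finset.image (fun u => C (Sum.inl u)) Finset.univ with hS₁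
  set S₂ : Finset (Fin k) := Finset.image (fun u => C (Sum.inr u)) Finset.univ with hS₂
  have hdisj : Disjoint S₁ S₂ := by
    rw [Finset.disjoint_left]
    rintro c hc1 hc2
    simp only [hS₁, hS₂, Finset.mem_image, Finset.mem_univ, true_and] at hc1 hc2
    obtain ⟨u, hu⟩ := hc1
    obtain ⟨v, hv⟩ := hc2
    exact C.valid (join_adj_lr (u := u) (v := v)) (hu.trans hv.symm)
  have hcol1 : G₁.Colorable S₁.card := by
    have : Fintype.card S₁ = S₁.card := Fintype.card_coe _
    rw [← this]
    refine Coloring.colorable ⟨fun u => (⟨C (Sum.inl u), by simp [hS₁]⟩ : S₁), ?_⟩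
    intro u v huv h
    exact C.valid (join_adj_ll.mpr huv) (by simpa using congrArg Subtype.val h)
  have hcol2 : G₂.Colorable S₂.card := by
    have : Fintype.card S₂ = S₂.card := Fintype.card_coe _
    rw [← this]
    refine Coloring.colorable ⟨fun u => (⟨C (Sum.inr u), by simp [hS₂]⟩ : S₂), ?_⟩
    intro u v huv h
    exact C.valid (join_adj_rr.mpr huv) (by simpa using congrArg Subtype.val h)
  have hcards : S₁.card + S₂.card ≤ k := by
    rw [← Finset.card_union_of_disjoint hdisj]
    simpa using Finset.card_le_card (Finset.subset_univ (S₁ ∪ S₂))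
  calc G₁.chromaticNumber + G₂.chromaticNumber
      ≤ (S₁.card : ℕ∞) + (S₂.card : ℕ∞) :=
        add_le_add hcol1.chromaticNumber_le hcol2.chromaticNumber_le
    _ ≤ (k : ℕ∞) := by exact_mod_cast Nat.cast_le.mpr hcards
    _ = J.chromaticNumber := ENat.coe_toNat hJne

lemma isClique_join_iff {s : Finset (α ⊕ β)} :
    (joinGraph G₁ G₂).IsClique (s : Set (α ⊕ β)) ↔
      G₁.IsClique (s.toLeft : Set α) ∧ G₂.IsClique (s.toRight : Set β) := by
  constructor
  · intro h
    constructor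
    · intro u hu v hv huv
      have := h (by simpa using hu) (by simpa using hv) (by simp [huv])
      simpa using this
    · intro u hu v hv huv
      have := h (by simpa using hu) (by simpa using hv) (by simp [huv])
      simpa using this
  · rintro ⟨h1, h2⟩
    intro x hx y hy hxy
    match x, y with
    | Sum.inl u, Sum.inl v =>
      exact join_adj_ll.mpr (h1 (by simpa using hx) (by simpa using hy) (by simpa using hxy))
    | Sum.inr u, Sum.inr v =>
      exact join_adj_rr.mpr (h2 (by simpa using hx) (by simpa using hy) (by simpa using hxy))
    | Sum.inl u, Sum.inr v => exact join_adj_lr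
    | Sum.inr u, Sum.inl v => exact join_adj_rl

lemma cliqueNum_join [Fintype α] [Fintype β] :
    (joinGraph G₁ G₂).cliqueNum = G₁.cliqueNum + G₂.cliqueNum := by
  classical
  apply le_antisymm
  · obtain ⟨s, hs⟩ := (joinGraph G₁ G₂).exists_isNClique_cliqueNum
    have hcl := isClique_join_iff.mp hs.isClique
    calc (joinGraph G₁ G₂).cliqueNum = s.card := hs.card_eq.symm
      _ = s.toLeft.card + s.toRight.card := Finset.card_toLeft_add_card_toRight.symm
      _ ≤ G₁.cliqueNum + G₂.cliqueNum :=
          add_le_add hcl.1.card_le_cliqueNum hcl.2.card_le_cliqueNum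
  · obtain ⟨s₁, hs₁⟩ := G₁.exists_isNClique_cliqueNum
    obtain ⟨s₂, hs₂⟩ := G₂.exists_isNClique_cliqueNum
    have hcl : (joinGraph G₁ G₂).IsClique ((s₁.disjSum s₂ : Finset (α ⊕ β)) : Set (α ⊕ β)) := by
      rw [isClique_join_iff]
      constructor <;> simp [hs₁.isClique, hs₂.isClique]
    have := hcl.card_le_cliqueNum
    simpa [Finset.card_disjSum, hs₁.card_eq, hs₂.card_eq] using this

/-- An isomorphism restricts to an isomorphism of induced subgraphs. -/
noncomputable def isoInduce (φ : G ≃g G') (s : Set α) : G.induce s ≃g G'.induce (φ '' s) where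
  toEquiv := Equiv.Set.image (⇑φ) s φ.toEquiv.injective
  map_rel_iff' := by
    intro a b
    simp only [Equiv.Set.image_apply, comap_adj, Function.Embedding.coe_subtype]
    exact φ.map_adj_iff

lemma cliqueNum_le_of_iso [Fintype α] [Fintype β] (φ : G ≃g G') :
    G.cliqueNum ≤ G'.cliqueNum := by
  classical
  obtain ⟨s, hs⟩ := G.exists_isNClique_cliqueNum
  have hcl : G'.IsClique ((s.image φ : Finset β) : Set β) := by
    intro x hx y hy hxy
    simp only [Finset.coe_image, Set.mem_image, Finset.mem_coe] at hx hy
    obtain ⟨u, hu, rfl⟩ := hx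
    obtain ⟨v, hv, rfl⟩ := hy
    exact φ.map_adj_iff.mpr (hs.isClique hu hv (fun h => hxy (by rw [h])))
  have hcard : (s.image φ).card = s.card :=
    Finset.card_image_of_injective _ φ.toEquiv.injective
  calc G.cliqueNum = (s.image φ).card := by rw [hcard, hs.card_eq]
    _ ≤ G'.cliqueNum := hcl.card_le_cliqueNum

lemma cliqueNum_eq_of_iso [Fintype α] [Fintype β] (φ : G ≃g G') :
    G.cliqueNum = G'.cliqueNum :=
  le_antisymm (cliqueNum_le_of_iso φ) (cliqueNum_le_of_iso φ.symm)

lemma chromaticNumber_le_of_iso [Fintype β] (φ : G ≃g G') :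
    G.chromaticNumber ≤ G'.chromaticNumber := by
  have hne : G'.chromaticNumber ≠ ⊤ :=
    ne_top_of_le_ne_top (ENat.coe_ne_top _) G'.colorable_of_fintype.chromaticNumber_le
  obtain ⟨C⟩ := G'.colorable_chromaticNumber_of_fintype
  have hc : G.Colorable (ENat.toNat G'.chromaticNumber) := ⟨C.comp φ.toHom⟩
  calc G.chromaticNumber ≤ _ := hc.chromaticNumber_le
    _ = G'.chromaticNumber := ENat.coe_toNat hne

lemma chromaticNumber_eq_of_iso [Fintype α] [Fintype β] (φ : G ≃g G') :
    G.chromaticNumber = G'.chromaticNumber :=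
  le_antisymm (chromaticNumber_le_of_iso φ) (chromaticNumber_le_of_iso φ.symm)

lemma indFree_of_iso {H : SimpleGraph γ} (φ : G ≃g G') (h : IndFree H G) : IndFree H G' := by
  intro s' ⟨ψ⟩
  exact h (φ.symm '' s') ⟨ψ.trans (isoInduce φ.symm s')⟩

/-- If all vertices of an induced copy of `H` in `K` lie in the image of a "side"
embedding `e` whose image induces a copy of `G`, then `H` appears induced in `G`. -/
lemma indFree_side {K : SimpleGraph γ} {H : SimpleGraph δ} (h : IndFree H G)
    (e : α ↪ γ) (he : ∀ u v, K.Adj (e u) (e v) ↔ G.Adj u v) {s : Set γ}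
    (ψ : H ≃g K.induce s) (hall : ∀ a, ∃ u, ((ψ a : s) : γ) = e u) : False := by
  classical
  set g : δ → α := fun a => (hall a).choose with hg
  have hge : ∀ a, e (g a) = ((ψ a : s) : γ) := fun a => (hall a).choose_spec.symm
  set s₁ : Set α := e ⁻¹' s with hs₁
  have hmem : ∀ a, g a ∈ s₁ := by
    intro a
    simp only [hs₁, Set.mem_preimage, hge a]
    exact (ψ a).2
  refine h s₁ ⟨?_⟩
  refine RelIso.mk (Equiv.mk (fun a => ⟨g a, hmem a⟩)
    (fun u => ψ.symm ⟨e u, u.2⟩) ?_ ?_) ?_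
  · intro a
    have : (⟨e (g a), (hmem a : _)⟩ : s) = ψ a := Subtype.ext (hge a)
    simp only [this]
    exact ψ.symm_apply_apply a
  · rintro ⟨u, hu⟩
    apply Subtype.ext
    apply e.injective
    rw [hge, ψ.apply_symm_apply]
  · intro a b
    simp only [Equiv.coe_fn_mk, comap_adj, Function.Embedding.coe_subtype]
    rw [← he, hge a, hge b]
    exact ψ.map_rel_iff (a := a) (b := b)

lemma indFree_join {H : SimpleGraph δ} (hH : ¬ HasSpanningCompleteBipartite H)
    (h₁ : IndFree H G₁) (h₂ : IndFree H G₂) : IndFree H (joinGraph G₁ G₂) := by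
  intro s ⟨ψ⟩
  by_cases hA : ∃ a : δ, (↑(ψ a) : α ⊕ β).isLeft
  · by_cases hB : ∃ b : δ, (↑(ψ b) : α ⊕ β).isRight
    · apply hH
      refine ⟨{a | (↑(ψ a) : α ⊕ β).isLeft}, {a | (↑(ψ a) : α ⊕ β).isRight},
        hA, hB, ?_, ?_, ?_⟩
      · rw [Set.disjoint_left]
        intro a ha ha'
        simp only [Set.mem_setOf_eq] at ha ha'
        cases h : (↑(ψ a) : α ⊕ β) <;> simp [h] at ha ha'
      · ext a
        simp only [Set.mem_union, Set.mem_setOf_eq, Set.mem_univ, iff_true]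
        cases h : (↑(ψ a) : α ⊕ β) <;> simp [h]
      · intro a ha b hb
        simp only [Set.mem_setOf_eq] at ha hb
        obtain ⟨u, hu⟩ := Sum.isLeft_iff.mp ha
        obtain ⟨v, hv⟩ := Sum.isRight_iff.mp hb
        refine ψ.map_rel_iff.mp ?_
        show (joinGraph G₁ G₂).Adj (↑(ψ a)) (↑(ψ b))
        rw [hu, hv]
        exact join_adj_lr
    · push_neg at hB
      refine indFree_side h₁ ⟨Sum.inl, Sum.inl_injective⟩ (fun u v => join_adj_ll) ψ ?_
      intro a
      rcases h : (↑(ψ a) : α ⊕ β) with u | v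
      · exact ⟨u, rfl⟩
      · exact absurd (by rw [h]; rfl) (hB a)
  · push_neg at hA
    refine indFree_side h₂ ⟨Sum.inr, Sum.inr_injective⟩ (fun u v => join_adj_rr) ψ ?_
    intro a
    rcases h : (↑(ψ a) : α ⊕ β) with u | v
    · exact absurd (by rw [h]; rfl) (hA a)
    · exact ⟨v, rfl⟩

lemma not_indFree_small {m n : ℕ} (hm : m ≤ 1) (H : SimpleGraph (Fin m))
    (G : SimpleGraph (Fin n)) (hn : 0 < n) : ¬ IndFree H G := by
  interval_cases m
  · intro h
    refine h ∅ ⟨RelIso.mk (Equiv.equivOfIsEmpty _ _) ?_⟩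
    intro a
    exact isEmptyElim a
  · intro h
    have v : Fin n := ⟨0, hn⟩
    refine h {v} ⟨RelIso.mk (Equiv.ofUnique _ _) ?_⟩
    intro a b
    have hab : a = b := Subsingleton.elim a b
    subst hab
    simp

lemma fstar_zero_of_small {ℋ : Set (Σ n : ℕ, SimpleGraph (Fin n))}
    (hsmall : ∃ H ∈ ℋ, H.1 ≤ 1) {w : ℕ} (hw : 0 < w) : fstar ℋ w = 0 := by
  obtain ⟨H, hHmem, hH1⟩ := hsmall
  refine le_antisymm ?_ zero_le
  refine iSup_le fun n => iSup_le fun G => iSup_le fun h1 => iSup_le fun h2 => ?_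
  exfalso
  have hn : 0 < n := by
    obtain ⟨s, hs⟩ := G.exists_isNClique_cliqueNum
    rw [h2] at hs
    obtain ⟨v, -⟩ := Finset.card_pos.mp (hs.card_eq.symm ▸ hw)
    exact v.pos
  exact not_indFree_small hH1 H.2 G hn (h1 H hHmem)

lemma indFree_top {m w : ℕ} (hm : 2 ≤ m) (H : SimpleGraph (Fin m))
    (hH : ¬ HasSpanningCompleteBipartite H) : IndFree H (⊤ : SimpleGraph (Fin w)) := by
  intro s ⟨ψ⟩
  apply hH
  refine ⟨{(⟨0, by omega⟩ : Fin m)}, {(⟨0, by omega⟩ : Fin m)}ᶜ, ⟨_, rfl⟩,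
    ⟨(⟨1, by omega⟩ : Fin m), by simp [Fin.ext_iff]⟩,
    disjoint_compl_right, by simp, ?_⟩
  intro a ha b hb
  rw [Set.mem_singleton_iff] at ha
  simp only [Set.mem_compl_iff, Set.mem_singleton_iff] at hb
  have hab : a ≠ b := fun h => hb (h ▸ ha)
  refine ψ.map_rel_iff.mp ?_
  have hne : ψ a ≠ ψ b := fun h => hab (ψ.injective h)
  exact fun hcontra => hne (Subtype.ext hcontra)

lemma cliqueNum_top (w : ℕ) : (⊤ : SimpleGraph (Fin w)).cliqueNum = w := by
  apply le_antisymm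
  · obtain ⟨s, hs⟩ := (⊤ : SimpleGraph (Fin w)).exists_isNClique_cliqueNum
    rw [← hs.card_eq]
    simpa using Finset.card_le_card (Finset.subset_univ s)
  · have hcl : (⊤ : SimpleGraph (Fin w)).IsClique ((Finset.univ : Finset (Fin w)) : Set (Fin w)) :=
      fun a _ b _ hab => by simp [hab]
    simpa using hcl.card_le_cliqueNum

lemma le_fstar {ℋ : Set (Σ n : ℕ, SimpleGraph (Fin n))} {w n : ℕ}
    (G : SimpleGraph (Fin n)) (h1 : ∀ H ∈ ℋ, IndFree H.2 G) (h2 : G.cliqueNum = w) :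
    G.chromaticNumber ≤ fstar ℋ w :=
  le_iSup_of_le n (le_iSup_of_le G (le_iSup_of_le h1 (le_iSup_of_le h2 le_rfl)))

lemma fstar_attained {ℋ : Set (Σ n : ℕ, SimpleGraph (Fin n))} {w : ℕ}
    (h0 : fstar ℋ w ≠ 0) (htop : fstar ℋ w ≠ ⊤) :
    ∃ (n : ℕ) (G : SimpleGraph (Fin n)), (∀ H ∈ ℋ, IndFree H.2 G) ∧
      G.cliqueNum = w ∧ G.chromaticNumber = fstar ℋ w := by
  set k := ENat.toNat (fstar ℋ w) with hkdef
  have hk : (k : ℕ∞) = fstar ℋ w := ENat.coe_toNat htop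
  have hk0 : k ≠ 0 := by
    intro h
    rw [h] at hk
    exact h0 (by exact_mod_cast hk.symm)
  have hlt : ((k - 1 : ℕ) : ℕ∞) < fstar ℋ w := by
    rw [← hk]
    exact_mod_cast Nat.sub_lt (Nat.pos_of_ne_zero hk0) one_pos
  rw [fstar] at hlt
  rw [lt_iSup_iff] at hlt
  obtain ⟨n, hlt⟩ := hlt
  rw [lt_iSup_iff] at hlt
  obtain ⟨G, hlt⟩ := hlt
  rw [lt_iSup_iff] at hlt
  obtain ⟨h1, hlt⟩ := hlt
  rw [lt_iSup_iff] at hlt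
  obtain ⟨h2, hlt⟩ := hlt
  refine ⟨n, G, h1, h2, le_antisymm (le_fstar G h1 h2) ?_⟩
  have hle : ((k - 1 : ℕ) : ℕ∞) + 1 ≤ G.chromaticNumber :=
    (ENat.add_one_le_iff (ENat.coe_ne_top _)).mpr hlt
  calc fstar ℋ w = (k : ℕ∞) := hk.symm
    _ = ((k - 1 + 1 : ℕ) : ℕ∞) := by
        congr 1
        omega
    _ = ((k - 1 : ℕ) : ℕ∞) + 1 := by push_cast; ring
    _ ≤ G.chromaticNumber := hle

lemma key_join {ℋ : Set (Σ n : ℕ, SimpleGraph (Fin n))}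
    (hH : ∀ H ∈ ℋ, ¬ HasSpanningCompleteBipartite H.2) {w₁ w₂ n₁ n₂ : ℕ}
    (G₁ : SimpleGraph (Fin n₁)) (G₂ : SimpleGraph (Fin n₂))
    (hf₁ : ∀ H ∈ ℋ, IndFree H.2 G₁) (hf₂ : ∀ H ∈ ℋ, IndFree H.2 G₂)
    (hw₁ : G₁.cliqueNum = w₁) (hw₂ : G₂.cliqueNum = w₂) :
    G₁.chromaticNumber + G₂.chromaticNumber ≤ fstar ℋ (w₁ + w₂) := by
  set J := joinGraph G₁ G₂ with hJ
  set Gbig := J.map finSumFinEquiv.toEmbedding with hGbig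
  have ι : J ≃g Gbig := SimpleGraph.Iso.map finSumFinEquiv J
  have hfree : ∀ H ∈ ℋ, IndFree H.2 Gbig := fun H hm =>
    indFree_of_iso ι (indFree_join (hH H hm) (hf₁ H hm) (hf₂ H hm))
  have hcl : Gbig.cliqueNum = w₁ + w₂ := by
    rw [← cliqueNum_eq_of_iso ι, hJ, cliqueNum_join, hw₁, hw₂]
  have hchi : G₁.chromaticNumber + G₂.chromaticNumber ≤ Gbig.chromaticNumber := by
    rw [← chromaticNumber_eq_of_iso ι]
    exact chromaticNumber_join_ge
  exact hchi.trans (le_fstar Gbig hfree hcl)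

end AuxLemmas

/-- If no `H ∈ ℋ` has a spanning complete bipartite subgraph and the optimal
`χ`-binding function `fstar ℋ` is finite everywhere, then it is superadditive. -/
theorem stmt15 (ℋ : Set (Σ n : ℕ, SimpleGraph (Fin n)))
    (hH : ∀ H ∈ ℋ, ¬ HasSpanningCompleteBipartite H.2)
    (hfin : ∀ w : ℕ, 0 < w → fstar ℋ w ≠ ⊤) :
    ∀ w₁ w₂ : ℕ, 0 < w₁ → 0 < w₂ →
      fstar ℋ w₁ + fstar ℋ w₂ ≤ fstar ℋ (w₁ + w₂) := by
  intro w₁ w₂ hw₁ hw₂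
  by_cases hsmall : ∃ H ∈ ℋ, H.1 ≤ 1
  · rw [fstar_zero_of_small hsmall hw₁, fstar_zero_of_small hsmall hw₂]
    simp
  · push_neg at hsmall
    have hbig : ∀ H ∈ ℋ, 2 ≤ H.1 := fun H h => hsmall H h
    have hne0 : ∀ w : ℕ, 0 < w → fstar ℋ w ≠ 0 := by
      intro w hw h0
      have hfree : ∀ H ∈ ℋ, IndFree H.2 (⊤ : SimpleGraph (Fin w)) := fun H hm =>
        indFree_top (hbig H hm) H.2 (hH H hm)
      have hle := le_fstar (⊤ : SimpleGraph (Fin w)) hfree (cliqueNum_top w)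
      rw [chromaticNumber_top, h0] at hle
      simp only [Fintype.card_fin, nonpos_iff_eq_zero, Nat.cast_eq_zero] at hle
      omega
    obtain ⟨n₁, G₁, h11, h12, h13⟩ := fstar_attained (hne0 w₁ hw₁) (hfin w₁ hw₁)
    obtain ⟨n₂, G₂, h21, h22, h23⟩ := fstar_attained (hne0 w₂ hw₂) (hfin w₂ hw₂)
    rw [← h13, ← h23]
    exact key_join hH G₁ G₂ h11 h21 h12 h22
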